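/- arXiv:2207.00886 — 3 statements merged into one kernel-verified Lean document; each statement's English description precedes it below -/
import Mathlib

section
/- Let C be a binary self-dual code of length n that contains the all-ones vector and has all codeword weights even. Let W be its exact weight enumerator and ρ = √2 − 1, μ = −√2 − 1, with Φ the field automorphism of ℚ(√2) sending √2 to −√2. Then for every 0 ≤ t ≤ n−1 and every v ∈ F₂^{n−t−1}: W_{<t>}[(1)v̄] = (−1)^{wt(v)} · ρᵗ · Φ(W_{<t>}[(0)v]), where v̄ is the complementary vector of v. -/
open Finset

noncomputable def rho : ℝ := Real.sqrt 2 - 1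
noncomputable def mu : ℝ := -Real.sqrt 2 - 1

def wt {n : ℕ} (v : Fin n → ZMod 2) : ℕ := (univ.filter fun i => v i = 1).card

/-- The t-th derivative with parameter x (x = ρ gives W_{<t>}; x = μ gives the image
Φ(W_{<t>}) of W_{<t>} under the automorphism Φ of ℚ(√2) with Φ(√2) = −√2, since the
entries of W_{<t>} are ℤ-linear combinations of powers of ρ and Φ(ρ) = μ). -/
noncomputable def wDerivP (x : ℝ) (t m : ℕ) (W : (Fin (t + m) → ZMod 2) → ℝ) :
    (Fin m → ZMod 2) → ℝ :=
  fun v => ∑ u : Fin t → ZMod 2, x ^ wt u * W (Fin.append u v)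

def IsSelfDual {n : ℕ} (C : Submodule (ZMod 2) (Fin n → ZMod 2)) : Prop :=
  ∀ u, u ∈ C ↔ ∀ c ∈ C, ∑ i, u i * c i = 0

lemma wt_add_wt_compl {t : ℕ} (u : Fin t → ZMod 2) :
    wt u + wt (fun i => u i + 1) = t := by
  have h : (univ.filter fun i => u i + 1 = 1) = (univ.filter fun i => ¬ u i = 1) := by
    apply filter_congr
    intro i _
    have : ∀ a : ZMod 2, (a + 1 = 1 ↔ ¬ a = 1) := by decide
    simpa using this (u i)
  simp only [wt, h]
  rw [Finset.card_filter_add_card_filter_not]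
  simp

lemma wt_le {t : ℕ} (u : Fin t → ZMod 2) : wt u ≤ t := by
  have := wt_add_wt_compl u; omega

lemma wt_compl {t : ℕ} (u : Fin t → ZMod 2) :
    wt (fun i => u i + 1) = t - wt u := by
  have := wt_add_wt_compl u; omega

lemma wt_append {a b : ℕ} (u : Fin a → ZMod 2) (w : Fin b → ZMod 2) :
    wt (Fin.append u w) = wt u + wt w := by
  simp only [wt, Finset.card_filter]
  rw [Fin.sum_univ_add]
  simp [Fin.append_left, Fin.append_right]

lemma append_add {p q : ℕ} (a b : Fin p → ZMod 2) (c d : Fin q → ZMod 2) :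
    Fin.append (a + b) (c + d) = Fin.append a c + Fin.append b d := by
  funext i
  refine Fin.addCases (fun j => ?_) (fun j => ?_) i <;>
    simp [Fin.append_left, Fin.append_right]


/-- For a binary self-dual code C of length n = t+(1+m) containing the all-ones
vector and with all codeword weights even, with exact weight enumerator W:
W_{<t>}[(1)v̄] = (−1)^{wt(v)} ρᵗ Φ(W_{<t>}[(0)v]) for every v ∈ F₂^{n−t−1},
where v̄ is the coordinatewise complement of v. -/
theorem stmt_11 (t m : ℕ) (C : Submodule (ZMod 2) (Fin (t + (1 + m)) → ZMod 2))
    (hC : IsSelfDual C)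
    (hones : (fun _ => (1 : ZMod 2)) ∈ C)
    (heven : ∀ c ∈ C, Even (wt c))
    (W : (Fin (t + (1 + m)) → ZMod 2) → ℝ)
    (hW : W = Set.indicator (C : Set (Fin (t + (1 + m)) → ZMod 2)) 1)
    (v : Fin m → ZMod 2) :
    wDerivP rho t (1 + m) W
        (Fin.append (fun _ : Fin 1 => (1 : ZMod 2)) (fun i => v i + 1)) =
      (-1 : ℝ) ^ wt v * rho ^ t *
        wDerivP mu t (1 + m) W (Fin.append (fun _ : Fin 1 => (0 : ZMod 2)) v) := by
  have h2 : Real.sqrt 2 ^ 2 = 2 := Real.sq_sqrt (by norm_num)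
  have hrmu : rho * (-mu) = 1 := by
    simp only [rho, mu]
    nlinarith [h2]
  subst hW
  simp only [wDerivP, Finset.mul_sum]
  -- reindex by complementation
  refine (Fintype.sum_equiv (Equiv.addRight (fun _ => 1 : Fin t → ZMod 2))
      _ _ (fun u => ?_)).symm
  have hcu : (Equiv.addRight (fun _ => 1 : Fin t → ZMod 2)) u = fun i => u i + 1 := rfl
  rw [hcu]
  refine Eq.symm ?_
  -- the complemented word equals the base word plus all-ones
  have hvec : Fin.append (fun i => u i + 1)
      (Fin.append (fun _ : Fin 1 => (1 : ZMod 2)) (fun i => v i + 1)) =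
      Fin.append u (Fin.append (fun _ : Fin 1 => (0 : ZMod 2)) v) +
        (fun _ => (1 : ZMod 2)) := by
    funext i
    simp only [Pi.add_apply]
    refine Fin.addCases (fun j => ?_) (fun j => ?_) i
    · simp [Fin.append_left]
    · simp only [Fin.append_right]
      refine Fin.addCases (fun k => ?_) (fun k => ?_) j <;>
        simp [Fin.append_left, Fin.append_right]
  rw [hvec]
  -- membership is preserved by adding all-ones
  have hmem : (Fin.append u (Fin.append (fun _ : Fin 1 => (0 : ZMod 2)) v) +
      (fun _ => (1 : ZMod 2)) ∈ C) ↔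
      Fin.append u (Fin.append (fun _ : Fin 1 => (0 : ZMod 2)) v) ∈ C := by
    constructor
    · intro h
      have := C.add_mem h hones
      have hx : Fin.append u (Fin.append (fun _ : Fin 1 => (0 : ZMod 2)) v) +
          (fun _ => (1 : ZMod 2)) + (fun _ => (1 : ZMod 2)) =
          Fin.append u (Fin.append (fun _ : Fin 1 => (0 : ZMod 2)) v) := by
        funext i
        simp only [Pi.add_apply]
        have : ∀ a : ZMod 2, a + 1 + 1 = a := by decide
        exact this _
      rwa [hx] at this
    · intro h
      exact C.add_mem h hones
  by_cases hc : Fin.append u (Fin.append (fun _ : Fin 1 => (0 : ZMod 2)) v) ∈ C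
  · have he := heven _ hc
    rw [wt_append, wt_append] at he
    have h0 : wt (fun _ : Fin 1 => (0 : ZMod 2)) = 0 := by
      simp [wt, Finset.filter_eq_empty_iff]
    rw [h0] at he
    simp only [Set.indicator_of_mem (hmem.mpr hc), Set.indicator_of_mem hc, Pi.one_apply,
      mul_one]
    rw [wt_compl]
    -- ρ^(t - wt u) = (-1)^(wt v) * ρ^t * μ^(wt u)
    have hle := wt_le u
    have hpow : rho ^ t = rho ^ (t - wt u) * rho ^ wt u := by
      rw [← pow_add, Nat.sub_add_cancel hle]
    rw [hpow]
    have hsign : (-1 : ℝ) ^ wt v * (-1 : ℝ) ^ wt u = 1 := by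
      rw [← pow_add]
      exact Even.neg_one_pow (by simpa [Nat.add_comm] using he)
    have h3 : rho ^ wt u * (-mu) ^ wt u = 1 := by rw [← mul_pow, hrmu, one_pow]
    have hmu : mu ^ wt u = (-1 : ℝ) ^ wt u * (-mu) ^ wt u := by
      rw [← mul_pow, neg_one_mul, neg_neg]
    have key : (-1 : ℝ) ^ wt v * (rho ^ (t - wt u) * rho ^ wt u) * mu ^ wt u =
        rho ^ (t - wt u) := by
      calc (-1 : ℝ) ^ wt v * (rho ^ (t - wt u) * rho ^ wt u) * mu ^ wt u
          = ((-1 : ℝ) ^ wt v * (-1 : ℝ) ^ wt u) * rho ^ (t - wt u) *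
            (rho ^ wt u * (-mu) ^ wt u) := by rw [hmu]; ring
        _ = rho ^ (t - wt u) := by rw [hsign, h3]; ring
    linarith [key]
  · simp [Set.indicator_of_notMem (hmem.not.mpr hc), Set.indicator_of_notMem hc]
end

section
/- Balance principle: Let C be a binary self-dual code of length n, fix a coordinate position t, and for δ ∈ {0,1} let A_{k,δ} be the number of codewords v of weight k with v[t] = δ. With ρ = √2 − 1, then Σ_{k=0}^{n} A_{k,1} ρ^{k−1} = Σ_{k=0}^{n} A_{k,0} ρ^{k+1}. -/
open Finset

lemma rho_pos : 0 < rho := by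
  have h := Real.sq_sqrt (by norm_num : (2:ℝ) ≥ 0)
  have h0 := Real.sqrt_nonneg 2
  unfold rho; nlinarith

lemma rho_ne : rho ≠ 0 := ne_of_gt rho_pos

lemma one_add_rho : 1 + rho = Real.sqrt 2 := by unfold rho; ring

lemma one_sub_rho : 1 - rho = Real.sqrt 2 * rho := by
  have h := Real.sq_sqrt (by norm_num : (2:ℝ) ≥ 0)
  unfold rho; nlinarith

noncomputable def chi (x : ZMod 2) : ℝ := if x = 1 then -1 else 1

lemma zmod2_cases : ∀ x : ZMod 2, x = 0 ∨ x = 1 := by decide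

lemma chi_zero : chi 0 = 1 := by simp [chi]

lemma chi_add (a b : ZMod 2) : chi (a + b) = chi a * chi b := by
  rcases zmod2_cases a with ha | ha <;> rcases zmod2_cases b with hb | hb <;>
    subst ha <;> subst hb <;> simp [chi]

lemma chi_sum {ι : Type*} (s : Finset ι) (f : ι → ZMod 2) :
    chi (∑ i ∈ s, f i) = ∏ i ∈ s, chi (f i) := by
  induction s using Finset.cons_induction with
  | empty => simp [chi_zero]
  | cons a s ha ih => rw [Finset.sum_cons, Finset.prod_cons, chi_add, ih]

lemma zmod2_sum (f : ZMod 2 → ℝ) : ∑ b, f b = f 0 + f 1 := by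
  have h : (univ : Finset (ZMod 2)) = {0, 1} := by decide
  rw [h, Finset.sum_insert (by decide), Finset.sum_singleton]

/-- weight factor -/
noncomputable def wfac {n : ℕ} (t : Fin n) (v : Fin n → ZMod 2) : ℝ :=
  rho ^ wt v * (if v t = 1 then rho⁻¹ else -rho)

lemma key (n : ℕ) (t : Fin n) (u : Fin n → ZMod 2) :
    ∑ v : Fin n → ZMod 2, chi (∑ i, u i * v i) * wfac t v
      = -(Real.sqrt 2 ^ n) * wfac t u := by
  classical
  set s2 := Real.sqrt 2 with hs2
  -- the per-coordinate factor
  set h : Fin n → ZMod 2 → ℝ := fun i b =>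
    chi (u i * b) * ((if b = 1 then rho else 1) *
      (if i = t then (if b = 1 then rho⁻¹ else -rho) else 1)) with hh
  have hterm : ∀ v : Fin n → ZMod 2,
      chi (∑ i, u i * v i) * wfac t v = ∏ i, h i (v i) := by
    intro v
    simp only [hh]
    rw [Finset.prod_mul_distrib, Finset.prod_mul_distrib, ← chi_sum]
    have h1 : ∏ i, (if v i = 1 then rho else (1:ℝ)) = rho ^ wt v := by
      rw [Finset.prod_ite, Finset.prod_const, Finset.prod_const_one, mul_one, wt]
    have h2 : ∏ i, (if i = t then (if v i = 1 then rho⁻¹ else -rho) else (1:ℝ))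
        = (if v t = 1 then rho⁻¹ else -rho) := by
      rw [Finset.prod_ite_eq' univ t (fun i => if v i = 1 then rho⁻¹ else -rho)]
      simp
    rw [h1, h2, wfac]
  rw [Finset.sum_congr rfl (fun v _ => hterm v), ← Fintype.prod_sum h]
  -- compute each coordinate sum
  have hG : ∀ i, (∑ b, h i b) = s2 *
      (if i = t then (if u i = 1 then -1 else rho) else (if u i = 1 then rho else 1)) := by
    intro i
    rw [zmod2_sum]
    simp only [hh, mul_zero, mul_one, chi_zero]
    by_cases hit : i = t
    · subst hit
      rcases zmod2_cases (u i) with hui | hui <;>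
        simp [hui, chi, mul_inv_cancel₀ rho_ne] <;>
        linarith [one_add_rho, one_sub_rho]
    · rcases zmod2_cases (u i) with hui | hui <;>
        simp [hit, hui, chi] <;>
        linarith [one_add_rho, one_sub_rho]
  rw [Finset.prod_congr rfl (fun i _ => hG i), Finset.prod_mul_distrib,
    Finset.prod_const, Finset.card_univ, Fintype.card_fin]
  -- now the product of the g's
  set g : Fin n → ℝ := fun i =>
    (if i = t then (if u i = 1 then -1 else rho) else (if u i = 1 then rho else 1)) with hg
  rw [← Finset.mul_prod_erase univ g (mem_univ t)]
  have herase : ∏ i ∈ univ.erase t, g i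
      = rho ^ (((univ.filter fun i => u i = 1).erase t).card) := by
    have : ∀ i ∈ univ.erase t, g i = (if u i = 1 then rho else 1) := by
      intro i hi
      simp only [hg]
      rw [if_neg (Finset.mem_erase.mp hi).1]
    rw [Finset.prod_congr rfl this, Finset.prod_ite, Finset.prod_const,
      Finset.prod_const_one, mul_one, Finset.filter_erase]
  rw [herase]
  by_cases hut : u t = 1
  · have htm : t ∈ univ.filter fun i => u i = 1 := by simp [hut]
    have hcard : ((univ.filter fun i => u i = 1).erase t).card + 1 = wt u :=
      Finset.card_erase_add_one htm
    simp only [hg, if_pos rfl, if_pos hut, wfac]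
    rw [← hcard, pow_succ]
    have hr : rho * rho⁻¹ = 1 := mul_inv_cancel₀ rho_ne
    linear_combination (s2 ^ n * rho ^ (((univ.filter fun i => u i = 1).erase t).card)) * hr
  · have htm : t ∉ univ.filter fun i => u i = 1 := by simp [hut]
    have hcard : ((univ.filter fun i => u i = 1).erase t) = univ.filter fun i => u i = 1 :=
      Finset.erase_eq_of_notMem htm
    simp only [hg, if_pos rfl, if_neg hut, wfac, hcard, wt]
    ring

lemma zmod2_ne_one : ∀ x : ZMod 2, x = 0 ↔ ¬ x = 1 := by decide

/-- Balance principle: for a binary self-dual code C of length n, a fixed coordinate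
position t, and A_{k,δ} the number of weight-k codewords v with v[t] = δ,
Σ_{k=0}^{n} A_{k,1} ρ^{k−1} = Σ_{k=0}^{n} A_{k,0} ρ^{k+1}   (ρ = √2 − 1). -/
theorem stmt_16 (n : ℕ) (C : Submodule (ZMod 2) (Fin n → ZMod 2))
    (hC : IsSelfDual C) (t : Fin n) :
    ∑ k ∈ Finset.range (n + 1),
        ({v : Fin n → ZMod 2 | v ∈ C ∧ wt v = k ∧ v t = 1}.ncard : ℝ) * rho ^ ((k : ℤ) - 1) =
      ∑ k ∈ Finset.range (n + 1),
        ({v : Fin n → ZMod 2 | v ∈ C ∧ wt v = k ∧ v t = 0}.ncard : ℝ) * rho ^ ((k : ℤ) + 1) := by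
  classical
  set CF : Finset (Fin n → ZMod 2) := univ.filter (fun v => v ∈ C) with hCF
  -- orthogonality
  have ortho : ∀ v : Fin n → ZMod 2,
      ∑ u ∈ CF, chi (∑ i, u i * v i) = if v ∈ C then (CF.card : ℝ) else 0 := by
    intro v
    by_cases hv : v ∈ C
    · rw [if_pos hv]
      have h1 : ∀ u ∈ CF, chi (∑ i, u i * v i) = 1 := by
        intro u hu
        have hu' : u ∈ C := (Finset.mem_filter.mp hu).2
        have h0 : ∑ i, v i * u i = 0 := (hC v).mp hv u hu'
        have h0' : ∑ i, u i * v i = 0 := by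
          rw [Finset.sum_congr rfl (fun i _ => mul_comm (u i) (v i))]; exact h0
        rw [h0', chi_zero]
      rw [Finset.sum_congr rfl h1, Finset.sum_const, nsmul_eq_mul, mul_one]
    · rw [if_neg hv]
      have hex : ∃ c ∈ C, ∑ i, v i * c i ≠ 0 := by
        by_contra hcon
        push_neg at hcon
        exact hv ((hC v).mpr hcon)
      obtain ⟨c, hc, hvc⟩ := hex
      have hvc1 : ∑ i, v i * c i = 1 := by
        rcases zmod2_cases (∑ i, v i * c i) with h | h
        · exact absurd h hvc
        · exact h
      have hbij : ∑ u ∈ CF, chi (∑ i, u i * v i)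
          = ∑ u ∈ CF, chi (∑ i, (u i + c i) * v i) := by
        apply Finset.sum_equiv (Equiv.addRight c)
        · intro u
          simp only [hCF, Finset.mem_filter, Finset.mem_univ, true_and,
            Equiv.coe_addRight]
          constructor
          · intro hu; exact C.add_mem hu hc
          · intro hu
            have := C.add_mem hu hc
            have hcc : u + c + c = u := by
              ext i
              simp [add_assoc, CharTwo.add_self_eq_zero]
            rwa [hcc] at this
        · intro u _
          congr 1
          refine Finset.sum_congr rfl (fun i _ => ?_)
          have hx : (Equiv.addRight c) u i + c i = u i := by
            show u i + c i + c i = u i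
            rcases zmod2_cases (u i) with h | h <;> rcases zmod2_cases (c i) with h2 | h2 <;>
              rw [h, h2] <;> decide
          rw [hx]
      have hflip : ∀ u : Fin n → ZMod 2,
          chi (∑ i, (u i + c i) * v i) = - chi (∑ i, u i * v i) := by
        intro u
        have hsplit : (∑ i, (u i + c i) * v i) = (∑ i, u i * v i) + (∑ i, c i * v i) := by
          rw [← Finset.sum_add_distrib]
          exact Finset.sum_congr rfl (fun i _ => by ring)
        have hcv : ∑ i, c i * v i = 1 := by
          rw [Finset.sum_congr rfl (fun i _ => mul_comm (c i) (v i))]; exact hvc1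
        rw [hsplit, chi_add, hcv]
        simp [chi]
      have h2 : ∑ u ∈ CF, chi (∑ i, u i * v i) = - ∑ u ∈ CF, chi (∑ i, u i * v i) := by
        conv_lhs => rw [hbij]
        rw [Finset.sum_congr rfl (fun u _ => hflip u), Finset.sum_neg_distrib]
      linarith
  -- the balance sum
  set S := ∑ v ∈ CF, wfac t v with hS
  have hSzero : S = 0 := by
    have h1 : (CF.card : ℝ) * S
        = ∑ v : Fin n → ZMod 2, (∑ u ∈ CF, chi (∑ i, u i * v i)) * wfac t v := by
      rw [Finset.sum_congr rfl (fun v _ => by rw [ortho v, ite_mul, zero_mul])]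
      rw [← Finset.sum_filter, ← hCF, ← Finset.mul_sum, hS]
    have h2 : ∑ v : Fin n → ZMod 2, (∑ u ∈ CF, chi (∑ i, u i * v i)) * wfac t v
        = -(Real.sqrt 2 ^ n) * S := by
      rw [Finset.sum_congr rfl (fun v _ => Finset.sum_mul _ _ _), Finset.sum_comm,
        Finset.sum_congr rfl (fun u _ => key n t u), ← Finset.mul_sum, hS]
    have h3 : ((CF.card : ℝ) + Real.sqrt 2 ^ n) * S = 0 := by
      linear_combination h1.trans h2
    have hpos : (0:ℝ) < (CF.card : ℝ) + Real.sqrt 2 ^ n := by positivity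
    rcases mul_eq_zero.mp h3 with h | h
    · exact absurd h (ne_of_gt hpos)
    · exact h
  -- rewrite both sides of the goal as sums over codewords
  have hwt : ∀ v ∈ CF.filter (fun v => v t = 1), wt v ∈ Finset.range (n + 1) := by
    intro v _
    simp only [Finset.mem_range, Nat.lt_succ_iff, wt]
    exact (Finset.card_filter_le _ _).trans (by simp)
  have hwt0 : ∀ v ∈ CF.filter (fun v => v t = 0), wt v ∈ Finset.range (n + 1) := by
    intro v _
    simp only [Finset.mem_range, Nat.lt_succ_iff, wt]
    exact (Finset.card_filter_le _ _).trans (by simp)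
  have hsetcard : ∀ (k : ℕ) (δ : ZMod 2),
      ({v : Fin n → ZMod 2 | v ∈ C ∧ wt v = k ∧ v t = δ}.ncard : ℝ)
        = (((CF.filter fun v => v t = δ).filter fun v => wt v = k).card : ℝ) := by
    intro k δ
    congr 1
    rw [show {v : Fin n → ZMod 2 | v ∈ C ∧ wt v = k ∧ v t = δ}
        = ↑((CF.filter fun v => v t = δ).filter fun v => wt v = k) by
      ext v; simp [hCF]; tauto]
    rw [Set.ncard_coe_finset]
  have hside : ∀ (δ : ZMod 2) (m : ℤ),
      ∑ k ∈ Finset.range (n + 1),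
          (((CF.filter fun v => v t = δ).filter fun v => wt v = k).card : ℝ) * rho ^ ((k : ℤ) + m)
        = ∑ v ∈ CF.filter (fun v => v t = δ), rho ^ ((wt v : ℤ) + m) := by
    intro δ m
    rw [Finset.sum_congr rfl (fun k _ => by
      rw [← nsmul_eq_mul, ← Finset.sum_const])]
    exact Finset.sum_fiberwise_of_maps_to' (by
      intro v hv
      simp only [Finset.mem_range, Nat.lt_succ_iff, wt]
      exact (Finset.card_filter_le _ _).trans (by simp)) _
  have hgoal1 : ∑ k ∈ Finset.range (n + 1),
      ({v : Fin n → ZMod 2 | v ∈ C ∧ wt v = k ∧ v t = 1}.ncard : ℝ) * rho ^ ((k : ℤ) - 1)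
      = ∑ v ∈ CF.filter (fun v => v t = 1), rho ^ wt v * rho⁻¹ := by
    simp only [sub_eq_add_neg]
    rw [Finset.sum_congr rfl (fun k _ => by rw [hsetcard k 1]), hside 1 (-1)]
    refine Finset.sum_congr rfl (fun v _ => ?_)
    rw [zpow_add₀ rho_ne, zpow_neg, zpow_one, zpow_natCast]
  have hgoal0 : ∑ k ∈ Finset.range (n + 1),
      ({v : Fin n → ZMod 2 | v ∈ C ∧ wt v = k ∧ v t = 0}.ncard : ℝ) * rho ^ ((k : ℤ) + 1)
      = ∑ v ∈ CF.filter (fun v => v t = 0), rho ^ wt v * rho := by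
    rw [Finset.sum_congr rfl (fun k _ => by rw [hsetcard k 0]), hside 0 1]
    refine Finset.sum_congr rfl (fun v _ => ?_)
    rw [zpow_add₀ rho_ne, zpow_one, zpow_natCast]
  have hsplit : S = (∑ v ∈ CF.filter (fun v => v t = 1), rho ^ wt v * rho⁻¹)
      - (∑ v ∈ CF.filter (fun v => v t = 0), rho ^ wt v * rho) := by
    rw [hS, ← Finset.sum_filter_add_sum_filter_not CF (fun v => v t = 1) (wfac t)]
    have e1 : ∑ v ∈ CF.filter (fun v => v t = 1), wfac t v
        = ∑ v ∈ CF.filter (fun v => v t = 1), rho ^ wt v * rho⁻¹ := by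
      refine Finset.sum_congr rfl (fun v hv => ?_)
      have := (Finset.mem_filter.mp hv).2
      rw [wfac, if_pos this]
    have e0 : ∑ v ∈ CF.filter (fun v => ¬ v t = 1), wfac t v
        = - ∑ v ∈ CF.filter (fun v => v t = 0), rho ^ wt v * rho := by
      have hfe : CF.filter (fun v => ¬ v t = 1) = CF.filter (fun v => v t = 0) := by
        apply Finset.filter_congr
        intro w _
        exact (zmod2_ne_one (w t)).symm
      rw [hfe, ← Finset.sum_neg_distrib]
      refine Finset.sum_congr rfl (fun v hv => ?_)
      have h0 := (Finset.mem_filter.mp hv).2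
      have h1 : ¬ v t = 1 := (zmod2_ne_one (v t)).mp h0
      rw [wfac, if_neg h1]
      ring
    rw [e1, e0]
    ring
  rw [hgoal1, hgoal0]
  linarith [hSzero, hsplit]
end

section
/- With notation of the balance principle (C self-dual of length n, A_{k,1} the number of weight-k codewords with 1 in a fixed coordinate position, A_k the number of weight-k codewords, ρ = √2 − 1): Σ_{k=0}^{n} A_{k,1} ρ^{k−1} = ((1+ρ)/4) · Σ_{k=0}^{n} A_k ρ^k. In particular, the left-hand side is independent of the chosen coordinate position. -/
open Finset

noncomputable def eps (a : ZMod 2) : ℝ := if a = 1 then -1 else 1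
noncomputable def gg (a : ZMod 2) : ℝ := if a = 1 then rho else 1

lemma eps_zero : eps 0 = 1 := by simp [eps]
lemma gg_zero : gg 0 = 1 := by simp [gg]
lemma gg_one : gg 1 = rho := by simp [gg]

lemma gg_nonneg (a : ZMod 2) : 0 ≤ gg a := by
  rcases eq_or_ne a 1 with h | h <;> simp [gg, h, rho_pos.le]

lemma hat_gg (a : ZMod 2) : 1 + rho * eps a = Real.sqrt 2 * gg a := by
  have h2 : Real.sqrt 2 ^ 2 = 2 := Real.sq_sqrt (by norm_num)
  rcases (show ∀ x : ZMod 2, x = 0 ∨ x = 1 by decide) a with rfl | rfl <;> simp [eps, gg, rho, show (0:ZMod 2) ≠ 1 by decide, show (1:ZMod 2) + 1 = 0 by decide] <;> nlinarith [h2]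

lemma eps_add (a b : ZMod 2) : eps (a + b) = eps a * eps b := by
  rcases (show ∀ x : ZMod 2, x = 0 ∨ x = 1 by decide) a with rfl | rfl <;> rcases (show ∀ x : ZMod 2, x = 0 ∨ x = 1 by decide) b with rfl | rfl <;> simp [eps, show (0:ZMod 2) ≠ 1 by decide, show (1:ZMod 2) + 1 = 0 by decide]

lemma eps_sum {ι : Type*} (s : Finset ι) (f : ι → ZMod 2) :
    eps (∑ i ∈ s, f i) = ∏ i ∈ s, eps (f i) := by
  induction s using Finset.cons_induction with
  | empty => simp [eps_zero]
  | cons a s ha ih => simp [Finset.sum_cons, Finset.prod_cons, eps_add, ih]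

lemma prod_gg (n : ℕ) (v : Fin n → ZMod 2) : ∏ i, gg (v i) = rho ^ wt v := by
  have h1 : ∏ i ∈ univ.filter (fun i => v i = 1), gg (v i) = rho ^ wt v := by
    rw [wt]
    rw [Finset.prod_congr rfl (g := fun _ => rho) (fun i hi => by
      simp only [mem_filter] at hi; simp [gg, hi.2])]
    exact Finset.prod_const rho
  have h2 : ∏ i ∈ univ.filter (fun i => ¬ v i = 1), gg (v i) = 1 := by
    apply Finset.prod_eq_one
    intro i hi; simp only [mem_filter] at hi; simp [gg, hi.2]
  rw [← Finset.prod_filter_mul_prod_filter_not univ (fun i => v i = 1) (fun i => gg (v i)),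
    h1, h2, mul_one]

lemma fourierF (n : ℕ) (h : Fin n → ZMod 2 → ℝ) (u : Fin n → ZMod 2) :
    ∑ v : Fin n → ZMod 2, (∏ i, h i (v i)) * eps (∑ i, u i * v i)
      = ∏ i, (h i 0 + h i 1 * eps (u i)) := by
  have key : ∀ v : Fin n → ZMod 2,
      (∏ i, h i (v i)) * eps (∑ i, u i * v i) = ∏ i, (h i (v i) * eps (u i * v i)) := by
    intro v; rw [eps_sum, ← Finset.prod_mul_distrib]
  simp_rw [key]
  have hps := Finset.prod_univ_sum (fun _ : Fin n => (univ : Finset (ZMod 2)))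
    (fun i a => h i a * eps (u i * a))
  rw [Fintype.piFinset_univ] at hps
  rw [← hps]
  apply Finset.prod_congr rfl
  intro i _
  have huniv : (univ : Finset (ZMod 2)) = {0, 1} := by decide
  rw [huniv, Finset.sum_insert (by decide), Finset.sum_singleton]
  simp [eps_zero]

lemma orth (n : ℕ) (C : Submodule (ZMod 2) (Fin n → ZMod 2)) (hC : IsSelfDual C)
    [DecidablePred (· ∈ C)] (v : Fin n → ZMod 2) :
    ∑ u ∈ univ.filter (· ∈ C), eps (∑ i, u i * v i)
      = if v ∈ C then ((univ.filter (· ∈ C)).card : ℝ) else 0 := by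
  set S := univ.filter (· ∈ C) with hS
  by_cases hv : v ∈ C
  · rw [if_pos hv]
    rw [Finset.sum_congr rfl (g := fun _ => (1:ℝ)) (fun u hu => by
      have hu' : u ∈ C := by simpa [hS] using hu
      have h0 : ∑ i, u i * v i = 0 := ((hC u).mp hu') v hv
      rw [h0, eps_zero])]
    simp
  · rw [if_neg hv]
    have hne : ¬ ∀ c ∈ C, ∑ i, v i * c i = 0 := fun h => hv ((hC v).mpr h)
    push_neg at hne
    obtain ⟨c, hc, hvc⟩ := hne
    have hone : ∀ x : ZMod 2, x ≠ 0 → x = 1 := by decide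
    have hvc1 : ∑ i, v i * c i = 1 := hone _ hvc
    have key : ∀ u : Fin n → ZMod 2,
        eps (∑ i, (u + c) i * v i) = - eps (∑ i, u i * v i) := by
      intro u
      have hsum : ∑ i, (u + c) i * v i = (∑ i, u i * v i) + ∑ i, v i * c i := by
        rw [← Finset.sum_add_distrib]
        apply Finset.sum_congr rfl
        intro i _
        show (u i + c i) * v i = u i * v i + v i * c i
        ring
      rw [hsum, hvc1, eps_add]
      simp [eps]
    have h2 : ∑ u ∈ S, eps (∑ i, (u + c) i * v i) = ∑ u ∈ S, eps (∑ i, u i * v i) := by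
      refine Finset.sum_equiv (Equiv.addRight c) ?_ ?_
      · intro u
        simp only [hS, Finset.mem_filter, Finset.mem_univ, true_and, Equiv.coe_addRight]
        exact (C.add_mem_iff_left hc).symm
      · intro u _; rfl
    rw [Finset.sum_congr rfl (fun u _ => key u), Finset.sum_neg_distrib] at h2
    linarith

lemma poisson (n : ℕ) (C : Submodule (ZMod 2) (Fin n → ZMod 2)) (hC : IsSelfDual C)
    [DecidablePred (· ∈ C)] (t : Fin n) (b : ZMod 2) :
    ((univ.filter (· ∈ C)).card : ℝ) *
        ∑ v ∈ (univ.filter (· ∈ C)).filter (fun v => v t = b),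
          ∏ i ∈ univ.erase t, gg (v i)
      = Real.sqrt 2 ^ (n - 1) *
        ∑ u ∈ univ.filter (· ∈ C),
          (∏ i ∈ univ.erase t, gg (u i)) * eps (u t * b) := by
  set S := univ.filter (· ∈ C) with hSdef
  set G := fun v : Fin n → ZMod 2 => ∏ i ∈ univ.erase t, gg (v i) with hG
  set h := fun (i : Fin n) (a : ZMod 2) =>
    if i = t then (if a = b then (1:ℝ) else 0) else gg a with hh
  have stepA : ∀ v : Fin n → ZMod 2, ∏ i, h i (v i) = if v t = b then G v else 0 := by
    intro v
    rw [← Finset.mul_prod_erase univ _ (mem_univ t)]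
    have hrest : ∏ i ∈ univ.erase t, h i (v i) = G v := by
      apply Finset.prod_congr rfl
      intro i hi
      have hit : i ≠ t := (Finset.mem_erase.mp hi).1
      simp [hh, hit]
    rw [hrest]
    simp only [hh, if_pos rfl]
    split_ifs <;> simp
  have stepHat : ∀ u : Fin n → ZMod 2,
      ∏ i, (h i 0 + h i 1 * eps (u i))
        = Real.sqrt 2 ^ (n - 1) * (G u * eps (u t * b)) := by
    intro u
    rw [← Finset.mul_prod_erase univ _ (mem_univ t)]
    have h1 : ∏ i ∈ univ.erase t, (h i 0 + h i 1 * eps (u i))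
        = Real.sqrt 2 ^ (n - 1) * G u := by
      have hfac : ∀ i ∈ univ.erase t,
          h i 0 + h i 1 * eps (u i) = Real.sqrt 2 * gg (u i) := by
        intro i hi
        have hit : i ≠ t := (Finset.mem_erase.mp hi).1
        simp only [hh, if_neg hit, gg_zero, gg_one] at *
        simpa [gg_zero, gg_one] using hat_gg (u i)
      rw [Finset.prod_congr rfl hfac, Finset.prod_mul_distrib, Finset.prod_const]
      have : (univ.erase t).card = n - 1 := by
        rw [Finset.card_erase_of_mem (mem_univ t), Finset.card_univ, Fintype.card_fin]
      rw [this, hG]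
    have h2 : h t 0 + h t 1 * eps (u t) = eps (u t * b) := by
      simp only [hh, if_pos rfl]
      rcases (show ∀ x : ZMod 2, x = 0 ∨ x = 1 by decide) b with rfl | rfl <;> simp [eps_zero, show (0:ZMod 2) ≠ 1 by decide, show (1:ZMod 2) + 1 = 0 by decide]
    rw [h1, h2]
    ring
  calc ((S.card : ℝ)) * ∑ v ∈ S.filter (fun v => v t = b), G v
      = ∑ v ∈ S, (if v t = b then G v else 0) * (S.card : ℝ) := by
        rw [Finset.sum_filter, Finset.mul_sum]
        exact Finset.sum_congr rfl fun v _ => mul_comm _ _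
    _ = ∑ v ∈ univ, (if v t = b then G v else 0) * (if v ∈ C then (S.card:ℝ) else 0) := by
        rw [hSdef, Finset.sum_filter]
        apply Finset.sum_congr rfl
        intro v _
        split_ifs <;> simp
    _ = ∑ v ∈ univ, (if v t = b then G v else 0) * ∑ u ∈ S, eps (∑ i, u i * v i) := by
        apply Finset.sum_congr rfl
        intro v _
        rw [orth n C hC v]
    _ = ∑ u ∈ S, ∑ v ∈ univ, (if v t = b then G v else 0) * eps (∑ i, u i * v i) := by
        simp_rw [Finset.mul_sum]
        exact Finset.sum_comm
    _ = ∑ u ∈ S, Real.sqrt 2 ^ (n - 1) * (G u * eps (u t * b)) := by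
        apply Finset.sum_congr rfl
        intro u _
        calc ∑ v ∈ univ, (if v t = b then G v else 0) * eps (∑ i, u i * v i)
            = ∑ v : Fin n → ZMod 2, (∏ i, h i (v i)) * eps (∑ i, u i * v i) := by
              apply Finset.sum_congr rfl
              intro v _
              rw [stepA v]
          _ = ∏ i, (h i 0 + h i 1 * eps (u i)) := fourierF n h u
          _ = Real.sqrt 2 ^ (n - 1) * (G u * eps (u t * b)) := stepHat u
    _ = Real.sqrt 2 ^ (n - 1) * ∑ u ∈ S, G u * eps (u t * b) := by
        rw [Finset.mul_sum]

/-- For a binary self-dual code C of length n, a fixed coordinate position t,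
A_{k,1} the number of weight-k codewords with 1 in position t, and A_k the number
of weight-k codewords: Σ_{k=0}^{n} A_{k,1} ρ^{k−1} = ((1+ρ)/4)·Σ_{k=0}^{n} A_k ρ^k;
in particular the left-hand side does not depend on t. -/
theorem stmt_17 (n : ℕ) (C : Submodule (ZMod 2) (Fin n → ZMod 2))
    (hC : IsSelfDual C) (t : Fin n) :
    ∑ k ∈ Finset.range (n + 1),
        ({v : Fin n → ZMod 2 | v ∈ C ∧ wt v = k ∧ v t = 1}.ncard : ℝ) * rho ^ ((k : ℤ) - 1) =
      ((1 + rho) / 4) *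
        ∑ k ∈ Finset.range (n + 1),
          ({v : Fin n → ZMod 2 | v ∈ C ∧ wt v = k}.ncard : ℝ) * rho ^ k := by
  classical
  set S := (univ : Finset (Fin n → ZMod 2)).filter (· ∈ C) with hSdef
  set G := fun v : Fin n → ZMod 2 => ∏ i ∈ univ.erase t, gg (v i) with hG
  set B0 := ∑ v ∈ S.filter (fun v => v t = 0), G v with hB0def
  set B1 := ∑ v ∈ S.filter (fun v => v t = 1), G v with hB1def
  have hz : ∀ x : ZMod 2, ¬ x = 0 ↔ x = 1 := by decide
  have hGnn : ∀ v, 0 ≤ G v := fun v => Finset.prod_nonneg fun i _ => gg_nonneg _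
  have hwt_le : ∀ v : Fin n → ZMod 2, wt v ≤ n := by
    intro v
    calc wt v ≤ (univ : Finset (Fin n)).card := Finset.card_filter_le _ _
      _ = n := by rw [Finset.card_univ, Fintype.card_fin]
  -- split sums over S by the t-coordinate
  have hsplit : ∀ f : (Fin n → ZMod 2) → ℝ,
      ∑ u ∈ S, f u = ∑ u ∈ S.filter (fun u => u t = 0), f u
        + ∑ u ∈ S.filter (fun u => u t = 1), f u := by
    intro f
    rw [← Finset.sum_filter_add_sum_filter_not S (fun u => u t = 0) f]
    congr 1
    apply Finset.sum_congr _ (fun _ _ => rfl)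
    apply Finset.filter_congr
    intro v _
    simp [hz (v t)]
  -- the two Poisson equations
  have eq0 : (S.card : ℝ) * B0 = Real.sqrt 2 ^ (n - 1) * (B0 + B1) := by
    have hp := poisson n C hC t 0
    have hrhs : ∑ u ∈ S, G u * eps (u t * 0) = B0 + B1 := by
      rw [Finset.sum_congr rfl (g := G) (fun u _ => by rw [mul_zero, eps_zero, mul_one])]
      exact hsplit G
    rw [← hSdef] at hp
    rw [← hG] at hp
    rw [hrhs] at hp
    exact hp
  have eq1 : (S.card : ℝ) * B1 = Real.sqrt 2 ^ (n - 1) * (B0 - B1) := by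
    have hp := poisson n C hC t 1
    have hrhs : ∑ u ∈ S, G u * eps (u t * 1) = B0 - B1 := by
      rw [Finset.sum_congr rfl (g := fun u => G u * eps (u t)) (fun u _ => by rw [mul_one])]
      rw [hsplit (fun u => G u * eps (u t))]
      have ha : ∑ u ∈ S.filter (fun u => u t = 0), G u * eps (u t) = B0 := by
        apply Finset.sum_congr rfl
        intro u hu
        have : u t = 0 := (Finset.mem_filter.mp hu).2
        rw [this, eps_zero, mul_one]
      have hb : ∑ u ∈ S.filter (fun u => u t = 1), G u * eps (u t) = -B1 := by
        rw [hB1def, ← Finset.sum_neg_distrib]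
        apply Finset.sum_congr rfl
        intro u hu
        have : u t = 1 := (Finset.mem_filter.mp hu).2
        rw [this]
        simp [eps]
      rw [ha, hb]
      ring
    rw [← hSdef, ← hG, hrhs] at hp
    exact hp
  -- positivity facts
  have hs2 : Real.sqrt 2 ^ 2 = 2 := Real.sq_sqrt (by norm_num)
  have hspos : (0:ℝ) < Real.sqrt 2 ^ (n - 1) :=
    pow_pos (Real.sqrt_pos.mpr (by norm_num)) _
  have hB1nn : 0 ≤ B1 := Finset.sum_nonneg fun v _ => hGnn v
  have hB0pos : 0 < B0 := by
    have hmem : (0 : Fin n → ZMod 2) ∈ S.filter (fun v => v t = 0) := by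
      simp [hSdef, Submodule.zero_mem]
    have hG0 : G 0 = 1 := by
      apply Finset.prod_eq_one
      intro i _
      exact gg_zero
    have := Finset.single_le_sum (f := G) (fun v _ => hGnn v) hmem
    rw [hG0] at this
    linarith
  -- the quadratic relation and its factorization
  have hquad : B0 ^ 2 - 2 * B0 * B1 - B1 ^ 2 = 0 := by
    have key : Real.sqrt 2 ^ (n - 1) * (B0 ^ 2 - 2 * B0 * B1 - B1 ^ 2)
        = Real.sqrt 2 ^ (n - 1) * 0 := by
      linear_combination B1 * eq0 - B0 * eq1
    have := mul_left_cancel₀ (ne_of_gt hspos) key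
    exact this
  have hfac : (B1 - rho * B0) * (B1 + (Real.sqrt 2 + 1) * B0) = 0 := by
    simp only [rho]
    linear_combination (-1 : ℝ) * hquad - B0 ^ 2 * hs2
  have hB1 : B1 = rho * B0 := by
    rcases mul_eq_zero.mp hfac with h | h
    · linarith
    · exfalso
      have : 0 < B1 + (Real.sqrt 2 + 1) * B0 := by
        have : (0:ℝ) < Real.sqrt 2 + 1 := by positivity
        nlinarith
      linarith
  -- identify the LHS with B1
  have hLHS : ∑ k ∈ Finset.range (n + 1),
      ({v : Fin n → ZMod 2 | v ∈ C ∧ wt v = k ∧ v t = 1}.ncard : ℝ) * rho ^ ((k : ℤ) - 1)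
        = B1 := by
    have hset : ∀ k, ({v : Fin n → ZMod 2 | v ∈ C ∧ wt v = k ∧ v t = 1}.ncard : ℝ)
        = (((S.filter (fun v => v t = 1)).filter (fun v => wt v = k)).card : ℝ) := by
      intro k
      congr 1
      rw [show {v : Fin n → ZMod 2 | v ∈ C ∧ wt v = k ∧ v t = 1}
          = ↑((S.filter (fun v => v t = 1)).filter (fun v => wt v = k)) from by
        ext v; simp [hSdef]; tauto]
      exact Set.ncard_coe_finset _
    calc ∑ k ∈ Finset.range (n + 1),
        ({v : Fin n → ZMod 2 | v ∈ C ∧ wt v = k ∧ v t = 1}.ncard : ℝ) * rho ^ ((k : ℤ) - 1)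
        = ∑ k ∈ Finset.range (n + 1),
            ∑ v ∈ (S.filter (fun v => v t = 1)).filter (fun v => wt v = k),
              rho ^ ((wt v : ℤ) - 1) := by
          apply Finset.sum_congr rfl
          intro k _
          rw [hset k, Finset.sum_congr rfl (g := fun _ => rho ^ ((k:ℤ)-1)) (fun v hv => by
            rw [(Finset.mem_filter.mp hv).2]), Finset.sum_const, nsmul_eq_mul]
      _ = ∑ v ∈ S.filter (fun v => v t = 1), rho ^ ((wt v : ℤ) - 1) := by
          apply Finset.sum_fiberwise_of_maps_to
          intro v _
          exact Finset.mem_range.mpr (Nat.lt_succ_of_le (hwt_le v))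
      _ = B1 := by
          apply Finset.sum_congr rfl
          intro v hv
          have hvt : v t = 1 := (Finset.mem_filter.mp hv).2
          have hwt1 : 1 ≤ wt v := by
            have : t ∈ univ.filter (fun i => v i = 1) := by simp [hvt]
            exact Finset.card_pos.mpr ⟨t, this⟩
          obtain ⟨m, hm⟩ : ∃ m, wt v = m + 1 := ⟨wt v - 1, by omega⟩
          have hprod : rho * G v = rho ^ wt v := by
            rw [← prod_gg n v, ← Finset.mul_prod_erase univ _ (mem_univ t), hvt, gg_one]
          have hGv : G v = rho ^ m := by
            have : rho * G v = rho * rho ^ m := by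
              rw [hprod, hm, pow_succ]
              ring
            exact mul_left_cancel₀ (ne_of_gt rho_pos) this
          rw [hm]
          have : ((m : ℤ) + 1 - 1) = (m : ℤ) := by ring
          rw [show ((m + 1 : ℕ) : ℤ) - 1 = (m : ℤ) by push_cast; ring, zpow_natCast, hGv]
  -- identify the RHS sum with B0 + rho * B1
  have hRHS : ∑ k ∈ Finset.range (n + 1),
      ({v : Fin n → ZMod 2 | v ∈ C ∧ wt v = k}.ncard : ℝ) * rho ^ k
        = B0 + rho * B1 := by
    have hset : ∀ k, ({v : Fin n → ZMod 2 | v ∈ C ∧ wt v = k}.ncard : ℝ)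
        = ((S.filter (fun v => wt v = k)).card : ℝ) := by
      intro k
      congr 1
      rw [show {v : Fin n → ZMod 2 | v ∈ C ∧ wt v = k}
          = ↑(S.filter (fun v => wt v = k)) from by ext v; simp [hSdef]]
      exact Set.ncard_coe_finset _
    calc ∑ k ∈ Finset.range (n + 1),
        ({v : Fin n → ZMod 2 | v ∈ C ∧ wt v = k}.ncard : ℝ) * rho ^ k
        = ∑ k ∈ Finset.range (n + 1), ∑ v ∈ S.filter (fun v => wt v = k),
            rho ^ wt v := by
          apply Finset.sum_congr rfl
          intro k _
          rw [hset k, Finset.sum_congr rfl (g := fun _ => rho ^ k) (fun v hv => by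
            rw [(Finset.mem_filter.mp hv).2]), Finset.sum_const, nsmul_eq_mul]
      _ = ∑ v ∈ S, rho ^ wt v := by
          apply Finset.sum_fiberwise_of_maps_to
          intro v _
          exact Finset.mem_range.mpr (Nat.lt_succ_of_le (hwt_le v))
      _ = B0 + rho * B1 := by
          rw [hsplit (fun v => rho ^ wt v)]
          have ha : ∑ v ∈ S.filter (fun v => v t = 0), rho ^ wt v = B0 := by
            apply Finset.sum_congr rfl
            intro v hv
            have hvt : v t = 0 := (Finset.mem_filter.mp hv).2
            rw [← prod_gg n v, ← Finset.mul_prod_erase univ _ (mem_univ t), hvt, gg_zero,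
              one_mul]
          have hb : ∑ v ∈ S.filter (fun v => v t = 1), rho ^ wt v = rho * B1 := by
            rw [hB1def, Finset.mul_sum]
            apply Finset.sum_congr rfl
            intro v hv
            have hvt : v t = 1 := (Finset.mem_filter.mp hv).2
            rw [← prod_gg n v, ← Finset.mul_prod_erase univ _ (mem_univ t), hvt, gg_one]
          rw [ha, hb]
  rw [hLHS, hRHS, hB1]
  simp only [rho]
  linear_combination (B0 * (1/2 - Real.sqrt 2 / 4)) * hs2
end
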